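/- Let (a₁,b₁,m₁) and (a₂,b₂,m₂) be elements of ℝ_{>0} × ℝ^n × O(h), and let (a₃,b₃,m₃) be the unique element of ℝ_{>0} × ℝ^n × O(h) with p(a₃,b₃,m₃) = p(a₁,b₁,m₁) p(a₂,b₂,m₂) (which exists since P is a group bijectively parametrized by ℝ_{>0} × ℝ^n × O(h)). Then for every x ∈ ℝ^n such that D_{a₂,b₂,m₂}(x) ≠ 0 and D_{a₁,b₁,m₁}(φ_{a₂,b₂,m₂}(x)) ≠ 0, one has D_{a₃,b₃,m₃}(x) ≠ 0, φ_{a₃,b₃,m₃}(x) = φ_{a₁,b₁,m₁}(φ_{a₂,b₂,m₂}(x)), and Ω_{a₃,b₃,m₃}(x) = Ω_{a₁,b₁,m₁}(φ_{a₂,b₂,m₂}(x)) · Ω_{a₂,b₂,m₂}(x). -/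
import Mathlib


open Matrix

noncomputable section

abbrev Idx (p q : ℕ) : Type := Unit ⊕ (Fin (p + q)) ⊕ Unit

/-- The diagonal quadratic form of signature `(p,q)` on `ℝ^n`, `n = p + q`. -/
def hMat (p q : ℕ) : Matrix (Fin (p + q)) (Fin (p + q)) ℝ :=
  Matrix.diagonal fun i => if (i : ℕ) < p then (1 : ℝ) else -1

/-- The quadratic form of signature `(p+1,q+1)` on `ℝ^{n+2}`, in block form
`[[0,0,1],[0,h,0],[1,0,0]]`. -/
def htMat (p q : ℕ) : Matrix (Idx p q) (Idx p q) ℝ :=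
  Matrix.of fun I J =>
    match I, J with
    | Sum.inl _, Sum.inr (Sum.inr _) => (1 : ℝ)
    | Sum.inr (Sum.inr _), Sum.inl _ => 1
    | Sum.inr (Sum.inl i), Sum.inr (Sum.inl j) => hMat p q i j
    | _, _ => 0

/-- The first standard basis vector `e₀` of `ℝ^{n+2}`. -/
def e0 (p q : ℕ) : Idx p q → ℝ := fun I =>
  match I with
  | Sum.inl _ => 1
  | _ => 0

/-- `c = -(2a)⁻¹ b h⁻¹ bᵀ`. -/
def cVal (p q : ℕ) (a : ℝ) (b : Fin (p + q) → ℝ) : ℝ :=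
  -(2 * a)⁻¹ * (b ⬝ᵥ ((hMat p q)⁻¹ *ᵥ b))

/-- `d = -a⁻¹ m h⁻¹ bᵀ`. -/
def dVec (p q : ℕ) (a : ℝ) (b : Fin (p + q) → ℝ)
    (m : Matrix (Fin (p + q)) (Fin (p + q)) ℝ) : Fin (p + q) → ℝ :=
  (-a⁻¹) • (m *ᵥ ((hMat p q)⁻¹ *ᵥ b))

/-- The element `p(a,b,m)` of the parabolic subgroup, in block form
`[[a,b,c],[0,m,d],[0,0,a⁻¹]]`. -/
def pMat (p q : ℕ) (a : ℝ) (b : Fin (p + q) → ℝ)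
    (m : Matrix (Fin (p + q)) (Fin (p + q)) ℝ) : Matrix (Idx p q) (Idx p q) ℝ :=
  Matrix.of fun I J =>
    match I, J with
    | Sum.inl _, Sum.inl _ => a
    | Sum.inl _, Sum.inr (Sum.inl j) => b j
    | Sum.inl _, Sum.inr (Sum.inr _) => cVal p q a b
    | Sum.inr (Sum.inl i), Sum.inr (Sum.inl j) => m i j
    | Sum.inr (Sum.inl i), Sum.inr (Sum.inr _) => dVec p q a b m i
    | Sum.inr (Sum.inr _), Sum.inr (Sum.inr _) => a⁻¹
    | _, _ => 0

/-- `|x|² = xᵀ h x`. -/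
def normSq (p q : ℕ) (x : Fin (p + q) → ℝ) : ℝ := x ⬝ᵥ (hMat p q *ᵥ x)

/-- The denominator `D(x) = a + b x - ½ c |x|²`. -/
def Dden (p q : ℕ) (a : ℝ) (b x : Fin (p + q) → ℝ) : ℝ :=
  a + b ⬝ᵥ x - (1 / 2) * cVal p q a b * normSq p q x

/-- The conformal transformation `φ(x) = (m x - ½|x|² d)/D(x)`. -/
def phiMap (p q : ℕ) (a : ℝ) (b : Fin (p + q) → ℝ)
    (m : Matrix (Fin (p + q)) (Fin (p + q)) ℝ) (x : Fin (p + q) → ℝ) :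
    Fin (p + q) → ℝ :=
  (Dden p q a b x)⁻¹ • (m *ᵥ x - ((1 / 2) * normSq p q x) • dVec p q a b m)

/-- The conformal factor `Ω(x) = D(x)⁻¹`. -/
def OmegaFn (p q : ℕ) (a : ℝ) (b : Fin (p + q) → ℝ) (x : Fin (p + q) → ℝ) : ℝ :=
  (Dden p q a b x)⁻¹

/-- Jacobian matrix of a map at a point: `J i j = ∂ⱼ φⁱ (x)`. -/
def jacobianAt (p q : ℕ) (φ : (Fin (p + q) → ℝ) → (Fin (p + q) → ℝ))
    (x : Fin (p + q) → ℝ) : Matrix (Fin (p + q)) (Fin (p + q)) ℝ :=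
  Matrix.of fun i j => fderiv ℝ φ x (Pi.single j 1) i

/-- Row vector of partial derivatives of a scalar function at a point. -/
def gradAt (p q : ℕ) (f : (Fin (p + q) → ℝ) → ℝ) (x : Fin (p + q) → ℝ) :
    Fin (p + q) → ℝ :=
  fun j => fderiv ℝ f x (Pi.single j 1)

lemma hMat_transpose (p q : ℕ) : (hMat p q)ᵀ = hMat p q := Matrix.diagonal_transpose _

lemma hMat_mul_self (p q : ℕ) : hMat p q * hMat p q = 1 := by
  rw [hMat, Matrix.diagonal_mul_diagonal]
  ext i j
  by_cases hij : i = j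
  · subst hij; by_cases h : (i:ℕ) < p <;> simp [Matrix.diagonal_apply_eq, h]
  · simp [Matrix.diagonal_apply_ne _ hij, Matrix.one_apply_ne hij]

lemma hMat_inv (p q : ℕ) : (hMat p q)⁻¹ = hMat p q :=
  Matrix.inv_eq_right_inv (hMat_mul_self p q)

lemma ortho_flip {p q : ℕ} {m : Matrix (Fin (p+q)) (Fin (p+q)) ℝ}
    (hm : mᵀ * hMat p q * m = hMat p q) : m * hMat p q * mᵀ = hMat p q := by
  have h1 : (hMat p q * mᵀ * hMat p q) * m = 1 := by
    calc (hMat p q * mᵀ * hMat p q) * m = hMat p q * (mᵀ * hMat p q * m) := by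
          simp only [mul_assoc]
    _ = 1 := by rw [hm, hMat_mul_self]
  have h2 : m * (hMat p q * mᵀ * hMat p q) = 1 := mul_eq_one_comm.mp h1
  calc m * hMat p q * mᵀ = m * hMat p q * mᵀ * (hMat p q * hMat p q) := by
        rw [hMat_mul_self, mul_one]
  _ = (m * (hMat p q * mᵀ * hMat p q)) * hMat p q := by simp only [mul_assoc]
  _ = hMat p q := by rw [h2, one_mul]

lemma dp_symm {p q : ℕ} (u v : Fin (p+q) → ℝ) :
    u ⬝ᵥ (hMat p q *ᵥ v) = v ⬝ᵥ (hMat p q *ᵥ u) := by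
  rw [Matrix.dotProduct_mulVec, ← Matrix.mulVec_transpose, hMat_transpose, dotProduct_comm]

lemma dp_m {p q : ℕ} {m : Matrix (Fin (p+q)) (Fin (p+q)) ℝ} (u v : Fin (p+q) → ℝ)
    (hm : mᵀ * hMat p q * m = hMat p q) :
    (m *ᵥ u) ⬝ᵥ (hMat p q *ᵥ (m *ᵥ v)) = u ⬝ᵥ (hMat p q *ᵥ v) := by
  rw [mulVec_mulVec, Matrix.dotProduct_mulVec, ← Matrix.vecMul_transpose,
    Matrix.vecMul_vecMul, ← mul_assoc, hm, ← Matrix.dotProduct_mulVec]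

lemma dp_HH {p q : ℕ} (u v : Fin (p+q) → ℝ) :
    u ⬝ᵥ (hMat p q *ᵥ (hMat p q *ᵥ v)) = u ⬝ᵥ v := by
  rw [mulVec_mulVec, hMat_mul_self, one_mulVec]

lemma mHmT {p q : ℕ} {m : Matrix (Fin (p+q)) (Fin (p+q)) ℝ} (v : Fin (p+q) → ℝ)
    (hm : mᵀ * hMat p q * m = hMat p q) :
    m *ᵥ (hMat p q *ᵥ (mᵀ *ᵥ v)) = hMat p q *ᵥ v := by
  rw [mulVec_mulVec, mulVec_mulVec, ortho_flip hm]

/-- The parametrization of `P` by `ℝ₊ × ℝⁿ × O(h)` intertwines the group law of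
`P` with composition of the conformal transformations `φ` and the cocycle law
for the conformal factors `Ω`. -/
theorem statement5 (p q : ℕ) (hn : 3 ≤ p + q)
    (a₁ a₂ a₃ : ℝ) (ha₁ : 0 < a₁) (ha₂ : 0 < a₂) (ha₃ : 0 < a₃)
    (b₁ b₂ b₃ : Fin (p + q) → ℝ)
    (m₁ m₂ m₃ : Matrix (Fin (p + q)) (Fin (p + q)) ℝ)
    (hm₁ : m₁ᵀ * hMat p q * m₁ = hMat p q)
    (hm₂ : m₂ᵀ * hMat p q * m₂ = hMat p q)
    (hm₃ : m₃ᵀ * hMat p q * m₃ = hMat p q)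
    (hprod : pMat p q a₃ b₃ m₃ = pMat p q a₁ b₁ m₁ * pMat p q a₂ b₂ m₂)
    (x : Fin (p + q) → ℝ)
    (hx₂ : Dden p q a₂ b₂ x ≠ 0)
    (hx₁ : Dden p q a₁ b₁ (phiMap p q a₂ b₂ m₂ x) ≠ 0) :
    Dden p q a₃ b₃ x ≠ 0 ∧
    phiMap p q a₃ b₃ m₃ x = phiMap p q a₁ b₁ m₁ (phiMap p q a₂ b₂ m₂ x) ∧
    OmegaFn p q a₃ b₃ x
      = OmegaFn p q a₁ b₁ (phiMap p q a₂ b₂ m₂ x) * OmegaFn p q a₂ b₂ x := by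
  have ha₁' : a₁ ≠ 0 := ne_of_gt ha₁
  have ha₂' : a₂ ≠ 0 := ne_of_gt ha₂
  -- extraction from the matrix product
  have ha3 : a₃ = a₁ * a₂ := by
    have := congrFun (congrFun hprod (Sum.inl ())) (Sum.inl ())
    simpa [pMat, Matrix.mul_apply, Fintype.sum_sum_type] using this
  have hb3 : b₃ = a₁ • b₂ + b₁ ᵥ* m₂ := by
    funext j
    have := congrFun (congrFun hprod (Sum.inl ())) (Sum.inr (Sum.inl j))
    simpa [pMat, Matrix.mul_apply, Fintype.sum_sum_type, Matrix.vecMul,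
      dotProduct] using this
  have hm3 : m₃ = m₁ * m₂ := by
    ext i j
    have := congrFun (congrFun hprod (Sum.inr (Sum.inl i))) (Sum.inr (Sum.inl j))
    simpa [pMat, Matrix.mul_apply, Fintype.sum_sum_type] using this
  have hm₂' : (m₂ᵀ)ᵀ * hMat p q * m₂ᵀ = hMat p q := by
    rw [Matrix.transpose_transpose]; exact ortho_flip hm₂
  -- abbreviations
  set H := hMat p q with hH
  set s := normSq p q x with hsdef
  set β₂ := b₂ ⬝ᵥ x with hβ₂
  set β₁₂ := (b₁ ᵥ* m₂) ⬝ᵥ x with hβ₁₂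
  set γ₁ := b₁ ⬝ᵥ (H *ᵥ b₁) with hγ₁
  set γ₂ := b₂ ⬝ᵥ (H *ᵥ b₂) with hγ₂
  set δ := (b₁ ᵥ* m₂) ⬝ᵥ (H *ᵥ b₂) with hδ
  set D₂ := Dden p q a₂ b₂ x with hD₂def
  set y := phiMap p q a₂ b₂ m₂ x with hydef
  set D₁ := Dden p q a₁ b₁ y with hD₁def
  -- c values
  have hc₁ : cVal p q a₁ b₁ = -(2*a₁)⁻¹ * γ₁ := by rw [cVal, hMat_inv]
  have hc₂ : cVal p q a₂ b₂ = -(2*a₂)⁻¹ * γ₂ := by rw [cVal, hMat_inv]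
  have hd₁ : dVec p q a₁ b₁ m₁ = (-a₁⁻¹) • (m₁ *ᵥ (H *ᵥ b₁)) := by
    rw [dVec, hMat_inv]
  have hd₂ : dVec p q a₂ b₂ m₂ = (-a₂⁻¹) • (m₂ *ᵥ (H *ᵥ b₂)) := by
    rw [dVec, hMat_inv]
  -- atoms
  have e1 : (m₂ *ᵥ x) ⬝ᵥ (H *ᵥ (m₂ *ᵥ x)) = s := dp_m x x hm₂
  have e2 : (m₂ *ᵥ x) ⬝ᵥ (H *ᵥ (m₂ *ᵥ (H *ᵥ b₂))) = β₂ := by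
    rw [dp_m x (H *ᵥ b₂) hm₂, dp_HH, dotProduct_comm]
  have e3 : (m₂ *ᵥ (H *ᵥ b₂)) ⬝ᵥ (H *ᵥ (m₂ *ᵥ x)) = β₂ := by
    rw [dp_symm]; exact e2
  have e4 : (m₂ *ᵥ (H *ᵥ b₂)) ⬝ᵥ (H *ᵥ (m₂ *ᵥ (H *ᵥ b₂))) = γ₂ := by
    rw [dp_m _ _ hm₂, dp_HH, dotProduct_comm]
  have e5 : b₁ ⬝ᵥ (m₂ *ᵥ x) = β₁₂ := (Matrix.dotProduct_mulVec b₁ m₂ x).symm ▸ rfl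
  have e6 : b₁ ⬝ᵥ (m₂ *ᵥ (H *ᵥ b₂)) = δ := by
    rw [Matrix.dotProduct_mulVec]
  have e7 : b₂ ⬝ᵥ (H *ᵥ (b₁ ᵥ* m₂)) = δ := dp_symm _ _
  have e8 : (b₁ ᵥ* m₂) ⬝ᵥ (H *ᵥ (b₁ ᵥ* m₂)) = γ₁ := by
    rw [← Matrix.mulVec_transpose, dp_m b₁ b₁ hm₂']
  -- expansion of D₂
  have iA1 : a₁⁻¹ * a₁ = 1 := inv_mul_cancel₀ ha₁'
  have iA2 : a₂⁻¹ * a₂ = 1 := inv_mul_cancel₀ ha₂'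
  have iD : D₂ * D₂⁻¹ = 1 := mul_inv_cancel₀ hx₂
  have hD₂x : D₂ = a₂ + β₂ + a₂⁻¹ * γ₂ * s / 4 := by
    rw [hD₂def, Dden, hc₂, mul_inv, ← hsdef, ← hβ₂]; ring
  -- b₁ ⬝ᵥ y
  have hby : b₁ ⬝ᵥ y = D₂⁻¹ * (β₁₂ + (1/2) * s * a₂⁻¹ * δ) := by
    rw [hydef, phiMap, hd₂, ← hD₂def, ← hsdef]
    simp only [dotProduct_smul, dotProduct_sub, smul_eq_mul, e5, e6]
    ring
  -- normSq y
  have hny : normSq p q y = D₂⁻¹ * D₂⁻¹ * (s + s * a₂⁻¹ * β₂ + 1/4 * s^2 * a₂⁻¹ * a₂⁻¹ * γ₂) := by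
    rw [normSq, hydef, phiMap, hd₂, ← hD₂def, ← hsdef, ← hH]
    simp only [Matrix.mulVec_smul, Matrix.mulVec_sub, dotProduct_smul, dotProduct_sub,
      sub_dotProduct, smul_dotProduct, smul_eq_mul, e1, e2, e3, e4]
    ring
  have hny' : normSq p q y = s * a₂⁻¹ * D₂⁻¹ := by
    rw [hny]
    linear_combination (-(D₂⁻¹*D₂⁻¹*s)) * iA2 + (s*a₂⁻¹*D₂⁻¹) * iD
      + (-(s*a₂⁻¹*D₂⁻¹*D₂⁻¹)) * hD₂x
  -- the key scalar identity
  have hD₁exp : D₁ = a₁ + D₂⁻¹ * (β₁₂ + 1/2 * s * a₂⁻¹ * δ)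
      + 1/4 * a₁⁻¹ * γ₁ * s * a₂⁻¹ * D₂⁻¹ := by
    rw [hD₁def, Dden, hc₁, hby, hny', mul_inv]; ring
  have hγ₃ : b₃ ⬝ᵥ (H *ᵥ b₃) = a₁^2 * γ₂ + 2*a₁*δ + γ₁ := by
    rw [hb3]
    simp only [Matrix.mulVec_add, Matrix.mulVec_smul, add_dotProduct, dotProduct_add,
      smul_dotProduct, dotProduct_smul, smul_eq_mul, e7, e8]
    rw [← hγ₂, ← hδ]
    ring
  have hc₃ : cVal p q a₃ b₃ = -(2⁻¹*a₁⁻¹*a₂⁻¹) * (a₁^2 * γ₂ + 2*a₁*δ + γ₁) := by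
    rw [cVal, hMat_inv, ← hH, hγ₃, ha3, mul_inv, mul_inv]; ring
  have hb3x : b₃ ⬝ᵥ x = a₁ * β₂ + β₁₂ := by
    rw [hb3]; simp only [add_dotProduct, smul_dotProduct, smul_eq_mul, hβ₂, hβ₁₂]
  have hKey : Dden p q a₃ b₃ x = D₁ * D₂ := by
    rw [Dden, hc₃, hb3x, ha3, ← hsdef, hD₁exp]
    linear_combination (-(β₁₂ + 1/2*s*a₂⁻¹*δ + 1/4*a₁⁻¹*γ₁*s*a₂⁻¹)) * iD
      + (1/4*a₂⁻¹*a₁*s*γ₂ + 1/2*a₂⁻¹*s*δ) * iA1 + (-a₁) * hD₂x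
  refine ⟨by rw [hKey]; exact mul_ne_zero hx₁ hx₂, ?_, ?_⟩
  · -- phi composition
    have hd₃ : dVec p q a₃ b₃ m₃
        = m₁ *ᵥ dVec p q a₂ b₂ m₂ + a₂⁻¹ • dVec p q a₁ b₁ m₁ := by
      rw [dVec, hMat_inv, ha3, hm3, hb3, hd₁, hd₂]
      rw [← Matrix.mulVec_transpose m₂ b₁, Matrix.mulVec_add, Matrix.mulVec_smul,
        ← Matrix.mulVec_mulVec, Matrix.mulVec_add, Matrix.mulVec_smul, mHmT b₁ hm₂,
        Matrix.mulVec_add, Matrix.mulVec_smul, Matrix.mulVec_smul]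
      funext i
      simp only [Pi.add_apply, Pi.smul_apply, smul_eq_mul, mul_inv, neg_smul, Pi.neg_apply]
      linear_combination (-(a₂⁻¹ * (m₁ *ᵥ m₂ *ᵥ hMat p q *ᵥ b₂) i)) * iA1
    have hyx : m₁ *ᵥ y = D₂⁻¹ • (m₁ *ᵥ (m₂ *ᵥ x)
        - ((1/2) * s) • (m₁ *ᵥ dVec p q a₂ b₂ m₂)) := by
      rw [hydef, phiMap, ← hD₂def, ← hsdef, Matrix.mulVec_smul, Matrix.mulVec_sub,
        Matrix.mulVec_smul]
    rw [phiMap, phiMap, ← hsdef, hKey, ← hD₁def, hny', hd₃, hm3, ← Matrix.mulVec_mulVec,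
      hyx]
    funext i
    simp only [Pi.smul_apply, Pi.sub_apply, Pi.add_apply, smul_eq_mul, mul_inv]
    ring
  · rw [OmegaFn, OmegaFn, OmegaFn, hKey, ← hD₁def, ← hD₂def, mul_inv]
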